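/- Let G=(V,E,f) be a weighted graph on n vertices in which some pair {u,v} is contained in more than n/2^{i+1} negative triangles, for some i ≥ 0 with 60·2^i·log n ≤ n. Form G' by retaining each edge of G independently with probability q = √(60·2^i·log n / n), except that {u,v} itself is retained. Then the probability that {u,v} lies in no negative triangle of G' is less than exp(−(n/2^{i+1})·q²) = exp(−30·log n) ≤ 1/n^{30} (log natural). -/

import Mathlib

open MeasureTheory ProbabilityTheory

/-- `{u,v,w}` is a negative triangle of the weighted graph `(G, f)`. -/
def NegTriangle {n : ℕ} (G : SimpleGraph (Fin n)) (f : Fin n → Fin n → ℤ)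
    (u v w : Fin n) : Prop :=
  G.Adj u v ∧ G.Adj u w ∧ G.Adj v w ∧ f u v + f u w + f v w < 0

theorem stmt11 {n : ℕ} {Ω : Type*} [MeasureSpace Ω] [IsProbabilityMeasure (ℙ : Measure Ω)]
    (hn : 2 ≤ n)
    (G : SimpleGraph (Fin n)) (f : Fin n → Fin n → ℤ) (hf : ∀ a b, f a b = f b a)
    (u v : Fin n) (i : ℕ)
    (h60 : 60 * 2 ^ i * Real.log n ≤ n)
    (q : ℝ) (hq : q = Real.sqrt (60 * 2 ^ i * Real.log n / n))
    (hmany : (n : ℝ) / 2 ^ (i + 1) < (Nat.card {w : Fin n // NegTriangle G f u v w} : ℝ))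
    (K : Sym2 (Fin n) → Ω → Bool) (hmeas : ∀ e, Measurable (K e))
    (hind : iIndepFun K ℙ)
    (hprob : ∀ e : Sym2 (Fin n), e ≠ s(u, v) →
      ℙ {ω | K e ω = true} = ENNReal.ofReal q)
    (hkeep : ∀ ω, K s(u, v) ω = true) :
    ℙ {ω | ∀ w : Fin n, ¬(NegTriangle G f u v w ∧
        K s(u, w) ω = true ∧ K s(v, w) ω = true)} <
        ENNReal.ofReal (Real.exp (-((n : ℝ) / 2 ^ (i + 1)) * q ^ 2)) ∧
      Real.exp (-((n : ℝ) / 2 ^ (i + 1)) * q ^ 2) ≤ 1 / (n : ℝ) ^ 30 := by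
  classical
  have hn1 : (1:ℝ) < (n:ℝ) := by exact_mod_cast hn
  have hnpos : (0:ℝ) < (n:ℝ) := by linarith
  have hlog : 0 < Real.log n := Real.log_pos hn1
  have harg0 : (0:ℝ) ≤ 60 * 2 ^ i * Real.log n / n := by positivity
  have hq0 : 0 ≤ q := hq ▸ Real.sqrt_nonneg _
  have hq2 : q ^ 2 = 60 * 2 ^ i * Real.log n / n := by
    rw [hq, Real.sq_sqrt harg0]
  have hq2pos : 0 < q ^ 2 := by rw [hq2]; positivity
  have hq21 : q ^ 2 ≤ 1 := by rw [hq2, div_le_one hnpos]; exact h60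
  have hq2nn : (0:ℝ) ≤ 1 - q ^ 2 := by linarith
  have hpow2 : (2:ℝ) ^ (i+1) = 2 * 2 ^ i := by rw [pow_succ]; ring
  have hexp : -((n : ℝ) / 2 ^ (i + 1)) * q ^ 2 = -(30 * Real.log n) := by
    rw [hq2, hpow2]
    have h2i : (2:ℝ) ^ i ≠ 0 := by positivity
    field_simp
    ring
  have hsecond : Real.exp (-((n : ℝ) / 2 ^ (i + 1)) * q ^ 2) ≤ 1 / (n : ℝ) ^ 30 := by
    rw [hexp]
    have h30 : Real.exp ((30:ℕ) * Real.log n) = (n:ℝ) ^ (30:ℕ) := by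
      rw [← Real.log_pow, Real.exp_log (by positivity)]
    rw [show (30:ℝ) * Real.log n = ((30:ℕ):ℝ) * Real.log n by norm_num,
      Real.exp_neg, h30, one_div]
  refine ⟨?_, hsecond⟩
  -- the combinatorial set-up
  set T : Finset (Fin n) := Finset.univ.filter (fun w => NegTriangle G f u v w) with hTdef
  have hmemT : ∀ {w : Fin n}, w ∈ T ↔ NegTriangle G f u v w := by
    intro w; simp [hTdef]
  have hcardT : Nat.card {w : Fin n // NegTriangle G f u v w} = T.card := by
    rw [Nat.card_eq_fintype_card, Fintype.card_subtype]
  rw [hcardT] at hmany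
  set B : Fin n → Set Ω :=
    (fun w => {ω | ¬(K s(u,w) ω = true ∧ K s(v,w) ω = true)}) with hBdef
  -- basic distinctness facts
  have hne : ∀ {w : Fin n}, w ∈ T → u ≠ v ∧ u ≠ w ∧ v ≠ w := by
    intro w hw
    have ht := hmemT.mp hw
    exact ⟨ht.1.ne, ht.2.1.ne, ht.2.2.1.ne⟩
  have hdisj : ∀ w ∈ T, ∀ w' ∈ T, w ≠ w' →
      Disjoint ({s(u,w), s(v,w)} : Finset (Sym2 (Fin n))) {s(u,w'), s(v,w')} := by
    intro w hw w' hw' hne'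
    obtain ⟨h1, h2, h3⟩ := hne hw
    obtain ⟨-, h2', h3'⟩ := hne hw'
    rw [Finset.disjoint_left]
    intro e he1 he2
    simp only [Finset.mem_insert, Finset.mem_singleton] at he1 he2
    rcases he1 with rfl | rfl <;> rcases he2 with h | h <;>
      rw [Sym2.eq_iff] at h <;> tauto
  -- probability of a single event
  have hPB : ∀ w ∈ T, ℙ (B w) = ENNReal.ofReal (1 - q ^ 2) := by
    intro w hw
    obtain ⟨h1, h2, h3⟩ := hne hw
    have he12 : s(u,w) ≠ s(v,w) := by
      intro h; rw [Sym2.eq_iff] at h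
      rcases h with ⟨h, -⟩ | ⟨-, h⟩
      · exact h1 h
      · exact h3 h.symm
    have he1uv : s(u,w) ≠ s(u,v) := by
      intro h; rw [Sym2.eq_iff] at h
      rcases h with ⟨-, h⟩ | ⟨h, -⟩
      · exact h3 h.symm
      · exact h1 h
    have he2uv : s(v,w) ≠ s(u,v) := by
      intro h; rw [Sym2.eq_iff] at h
      rcases h with ⟨h, -⟩ | ⟨-, h⟩
      · exact h1 h.symm
      · exact h2 h.symm
    have hi := (hind.indepFun he12).measure_inter_preimage_eq_mul
      ({true} : Set Bool) ({true} : Set Bool)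
      (measurableSet_singleton true) (measurableSet_singleton true)
    have hpre : ∀ e : Sym2 (Fin n), K e ⁻¹' {true} = {ω | K e ω = true} := fun _ => rfl
    rw [hpre, hpre, hprob _ he1uv, hprob _ he2uv] at hi
    have hBc : B w = ({ω | K s(u,w) ω = true} ∩ {ω | K s(v,w) ω = true})ᶜ := by
      ext ω; simp [hBdef]
    have hms : MeasurableSet ({ω | K s(u,w) ω = true} ∩ {ω | K s(v,w) ω = true}) :=
      ((hmeas _) (measurableSet_singleton true)).inter ((hmeas _) (measurableSet_singleton true))
    rw [hBc, measure_compl hms (measure_ne_top _ _), hi,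
      ← ENNReal.ofReal_mul hq0, ← pow_two, measure_univ,
      show (1:ENNReal) = ENNReal.ofReal 1 from ENNReal.ofReal_one.symm,
      ← ENNReal.ofReal_sub 1 (sq_nonneg q)]
  -- the independence-driven product formula
  have hmain : ∀ A : Finset (Fin n), A ⊆ T →
      ℙ (⋂ w ∈ A, B w) = ENNReal.ofReal (1 - q ^ 2) ^ A.card := by
    intro A
    induction A using Finset.induction_on with
    | empty => intro _; simp
    | @insert a A' ha ih =>
      intro hsub
      have haT : a ∈ T := hsub (Finset.mem_insert_self a A')
      have hsubA' : A' ⊆ T := fun x hx => hsub (Finset.mem_insert_of_mem hx)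
      set Sa : Finset (Sym2 (Fin n)) := {s(u,a), s(v,a)} with hSa
      set SA : Finset (Sym2 (Fin n)) := A'.biUnion (fun w => {s(u,w), s(v,w)}) with hSA
      have hSdisj : Disjoint Sa SA := by
        rw [hSA, Finset.disjoint_biUnion_right]
        intro w hw
        exact hdisj a haT w (hsubA' hw) (fun h => ha (h ▸ hw))
      have hIF := hind.indepFun_finset Sa SA hSdisj hmeas
      have hmem1 : s(u,a) ∈ Sa := Finset.mem_insert_self _ _
      have hmem2 : s(v,a) ∈ Sa := Finset.mem_insert_of_mem (Finset.mem_singleton_self _)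
      have hmemu : ∀ w : A', s(u,(w:Fin n)) ∈ SA := fun w =>
        Finset.mem_biUnion.mpr ⟨w.1, w.2, Finset.mem_insert_self _ _⟩
      have hmemv : ∀ w : A', s(v,(w:Fin n)) ∈ SA := fun w =>
        Finset.mem_biUnion.mpr ⟨w.1, w.2, Finset.mem_insert_of_mem (Finset.mem_singleton_self _)⟩
      let φ : ((e : Sa) → Bool) → Bool × Bool := fun g => (g ⟨s(u,a), hmem1⟩, g ⟨s(v,a), hmem2⟩)
      let ψ : ((e : SA) → Bool) → (A' → Bool × Bool) := fun g w =>
        (g ⟨s(u,(w:Fin n)), hmemu w⟩, g ⟨s(v,(w:Fin n)), hmemv w⟩)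
      have hφ : Measurable φ := by fun_prop
      have hψ : Measurable ψ := by fun_prop
      have hXY := hIF.comp hφ hψ
      set setA : Set (Bool × Bool) := {p | ¬(p.1 = true ∧ p.2 = true)} with hsetAdef
      set setB : Set (A' → Bool × Bool) :=
        {g | ∀ w, ¬((g w).1 = true ∧ (g w).2 = true)} with hsetBdef
      have hsetA : MeasurableSet setA := (Set.to_countable setA).measurableSet
      have hsetB : MeasurableSet setB := by
        have : setB = ⋂ w : A', (fun g : A' → Bool × Bool => g w) ⁻¹' setA := by
          ext g; simp [hsetAdef, hsetBdef]
        rw [this]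
        exact MeasurableSet.iInter (fun w => measurable_pi_apply w hsetA)
      have hkey := hXY.measure_inter_preimage_eq_mul setA setB hsetA hsetB
      have hpre1 : (φ ∘ fun ω (e : Sa) => K e ω) ⁻¹' setA = B a := by
        ext ω; simp [φ, hsetAdef, hBdef]
      have hpre2 : (ψ ∘ fun ω (e : SA) => K e ω) ⁻¹' setB = ⋂ w ∈ A', B w := by
        ext ω
        simp [ψ, hsetBdef, hBdef, Subtype.forall]
      rw [hpre1, hpre2] at hkey
      rw [Finset.set_biInter_insert, hkey, hPB a haT, ih hsubA',
        Finset.card_insert_of_notMem ha, pow_succ]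
      ring
  -- identify the target set
  have hsetEq : {ω | ∀ w : Fin n, ¬(NegTriangle G f u v w ∧
      K s(u,w) ω = true ∧ K s(v,w) ω = true)} = ⋂ w ∈ T, B w := by
    ext ω
    simp only [Set.mem_setOf_eq, Set.mem_iInter, hBdef]
    constructor
    · intro h w hw
      intro hc
      exact h w ⟨hmemT.mp hw, hc⟩
    · intro h w hc
      exact h w (hmemT.mpr hc.1) hc.2
  rw [hsetEq, hmain T (subset_refl T), ← ENNReal.ofReal_pow hq2nn]
  apply (ENNReal.ofReal_lt_ofReal_iff (Real.exp_pos _)).mpr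
  calc (1 - q ^ 2) ^ T.card
      ≤ (Real.exp (-(q ^ 2))) ^ T.card := by
        apply pow_le_pow_left₀ hq2nn
        have := Real.add_one_le_exp (-(q ^ 2))
        linarith
    _ = Real.exp (-(q ^ 2) * T.card) := by
        rw [← Real.exp_nat_mul]; congr 1; ring
    _ < Real.exp (-((n : ℝ) / 2 ^ (i + 1)) * q ^ 2) := by
        apply Real.exp_lt_exp.mpr
        nlinarith [hq2pos, hmany]
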